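/- Let k(z) = a z + λ ∫_0^∞ (e^{−xz} − 1) dF(x), where a > 0, λ > 0 and F is the distribution function of a strictly positive random variable. Then for every s > 0 the equation k(z) = s has exactly one root z = c(s) in the half-plane Re z > 0, and this root is real and positive. -/

import Mathlib

open MeasureTheory Real Set Filter
open scoped Topology

noncomputable section

/-- The Laplace exponent `k(z) = a z + λ ∫ (e^{-xz} - 1) dF(x)` of a compound Poisson
process with drift `-a`, jump rate `lam` and jump distribution `μ`. -/
def lapExp (a lam : ℝ) (μ : MeasureTheory.Measure ℝ) (z : ℂ) : ℂ :=
  a * z + lam * ∫ x : ℝ, (Complex.exp (-(x * z)) - 1) ∂μ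

variable {Ω : Type*} [MeasurableSpace Ω]

/-- `ξ` is a compound Poisson process with negative drift `-a`, jump rate `lam` and
jump distribution `μ` (a probability measure concentrated on `(0,∞)`), under the
probability measure `P`: it starts at `0`, has right-continuous paths, stationary
independent increments, and the one-dimensional Laplace transforms
`E e^{-z ξ(t)} = e^{t k(z)}` prescribed by the Laplace exponent. -/
structure IsCPP (P : Measure Ω) (a lam : ℝ) (μ : Measure ℝ) (ξ : ℝ → Ω → ℝ) : Prop where
  ha : 0 < a
  hlam : 0 < lam
  hprob : IsProbabilityMeasure μ
  hpos : μ (Set.Iic 0) = 0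
  hmeas : ∀ t, Measurable (ξ t)
  hzero : ∀ ω, ξ 0 ω = 0
  hrc : ∀ ω t, ContinuousWithinAt (fun u => ξ u ω) (Set.Ici t) t
  hstat : ∀ u t : ℝ, 0 ≤ u → 0 ≤ t →
    Measure.map (fun ω => ξ (u + t) ω - ξ u ω) P = Measure.map (ξ t) P
  hindep : ∀ (n : ℕ) (t : ℕ → ℝ), Monotone t → (∀ i, 0 ≤ t i) →
    ProbabilityTheory.iIndepFun
      (fun (i : Fin n) ω => ξ (t (i.1 + 1)) ω - ξ (t i.1) ω) P
  hlaplace : ∀ t : ℝ, 0 ≤ t → ∀ z : ℂ, 0 ≤ z.re →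
    ∫ ω, Complex.exp (-(z * ξ t ω)) ∂P = Complex.exp (t * lapExp a lam μ z)

/-- `c s` is, for each `s > 0`, the unique root of `k(z) = s` in the half-plane
`Re z > 0`, and it is real and positive. -/
def IsUniqueRoot (a lam : ℝ) (μ : Measure ℝ) (c : ℝ → ℝ) : Prop :=
  ∀ s : ℝ, 0 < s → 0 < c s ∧ lapExp a lam μ (c s) = s ∧
    ∀ z : ℂ, 0 < z.re → lapExp a lam μ z = s → z = c s

/-- `R s` is the resolvent (scale function) of the compound Poisson process with
Laplace exponent `k`: it vanishes on `(-∞,0)`, takes the value `1/a` at `0`, and its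
Laplace transform is `(k(z) - s)⁻¹` for `Re z > c(s)`. -/
def IsResolvent (a lam : ℝ) (μ : Measure ℝ) (c : ℝ → ℝ) (R : ℝ → ℝ → ℝ) : Prop :=
  ∀ s : ℝ, 0 < s →
    (∀ x : ℝ, x < 0 → R s x = 0) ∧ R s 0 = 1 / a ∧ (∀ x, 0 ≤ R s x) ∧
    ∀ z : ℂ, c s < z.re →
      ∫ x in Set.Ioi (0:ℝ), Complex.exp (-(x * z)) * (R s x : ℂ) = (lapExp a lam μ z - s)⁻¹

/-- First passage time of the level `-x` by `ξ` (defined as an infimum; it is a junk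
value off the event `hitsMinus ξ x`). -/
def tauMinus (ξ : ℝ → Ω → ℝ) (x : ℝ) (ω : Ω) : ℝ := sInf {t | 0 ≤ t ∧ ξ t ω ≤ -x}

/-- The event that `ξ` ever passes below `-x` (i.e. `τ⁻(x) < ∞`). -/
def hitsMinus (ξ : ℝ → Ω → ℝ) (x : ℝ) : Set Ω := {ω | ∃ t, 0 ≤ t ∧ ξ t ω ≤ -x}

/-- First crossing time of the level `x` by `ξ`. -/
def tauPlus (ξ : ℝ → Ω → ℝ) (x : ℝ) (ω : Ω) : ℝ := sInf {t | 0 ≤ t ∧ x < ξ t ω}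

/-- The event that `ξ` ever crosses the level `x` (i.e. `τ⁺(x) < ∞`). -/
def hitsPlus (ξ : ℝ → Ω → ℝ) (x : ℝ) : Set Ω := {ω | ∃ t, 0 ≤ t ∧ x < ξ t ω}

/-- The overshoot `T⁺(x) = ξ(τ⁺(x)) - x` of `ξ` over the level `x`. -/
def overshoot (ξ : ℝ → Ω → ℝ) (x : ℝ) (ω : Ω) : ℝ := ξ (tauPlus ξ x ω) ω - x

lemma norm_cexp_sub_one_le {w : ℂ} (hw : w.re ≤ 0) : ‖Complex.exp w - 1‖ ≤ ‖w‖ := by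
  have hder : ∀ t ∈ Set.Icc (0:ℝ) 1, HasDerivWithinAt (fun t : ℝ => Complex.exp (t * w))
      (w * Complex.exp (t * w)) (Set.Icc 0 1) t := by
    intro t ht
    have h1 : HasDerivAt (fun t : ℝ => (t : ℂ) * w) w t := by
      simpa using (Complex.ofRealCLM.hasDerivAt (x := t)).mul_const w
    simpa [mul_comm] using h1.cexp.hasDerivWithinAt
  have hbd : ∀ t ∈ Set.Icc (0:ℝ) 1, ‖w * Complex.exp (t * w)‖ ≤ ‖w‖ := by
    intro t ht
    rw [norm_mul, Complex.norm_exp]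
    have h2 : ((t:ℂ) * w).re = t * w.re := by simp
    rw [h2]
    have h3 : t * w.re ≤ 0 := mul_nonpos_of_nonneg_of_nonpos ht.1 hw
    calc ‖w‖ * Real.exp (t * w.re) ≤ ‖w‖ * 1 := by
          gcongr; exact Real.exp_le_one_iff.mpr h3
      _ = ‖w‖ := mul_one _
  have := Convex.norm_image_sub_le_of_norm_hasDerivWithin_le hder hbd (convex_Icc 0 1)
    (Set.left_mem_Icc.2 zero_le_one) (Set.right_mem_Icc.2 zero_le_one)
  simpa using this

set_option maxHeartbeats 2000000 in
/-- for `k(z) = a z + λ ∫₀^∞ (e^{-xz} - 1) dF(x)` with `a, λ > 0` and `F`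
the distribution of a strictly positive random variable, for every `s > 0` the equation
`k(z) = s` has exactly one root in the half-plane `Re z > 0`, and this root is real
and positive. -/
theorem statement18
    (a lam : ℝ) (ha : 0 < a) (hlam : 0 < lam)
    (μ : Measure ℝ) [IsProbabilityMeasure μ] (hμ : μ (Set.Iic 0) = 0)
    (s : ℝ) (hs : 0 < s) :
    ∃ c : ℝ, 0 < c ∧ lapExp a lam μ ((c : ℝ) : ℂ) = s ∧
      ∀ z : ℂ, 0 < z.re → lapExp a lam μ z = s → z = c := by
  -- a.e. positivity of x
  have hae : ∀ᵐ x ∂μ, 0 < x := by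
    rw [ae_iff]
    have : {x : ℝ | ¬ 0 < x} = Set.Iic 0 := by ext x; simp [not_lt]
    rw [this]; exact hμ
  -- real integrand integrability
  have hGint : ∀ r : ℝ, 0 ≤ r → Integrable (fun x => Real.exp (-(x*r)) - 1) μ := by
    intro r hr
    refine Integrable.mono' (integrable_const 1)
      ((Continuous.aestronglyMeasurable (by continuity))) ?_
    filter_upwards [hae] with x hx
    have h1 : Real.exp (-(x*r)) ≤ 1 := Real.exp_le_one_iff.mpr
      (neg_nonpos.mpr (mul_nonneg hx.le hr))
    have h2 : (0:ℝ) < Real.exp (-(x*r)) := Real.exp_pos _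
    rw [Real.norm_eq_abs, abs_le]; constructor <;> linarith
  -- complex integrand integrability
  have hCint : ∀ z : ℂ, 0 ≤ z.re → Integrable (fun x : ℝ => Complex.exp (-(x*z)) - 1) μ := by
    intro z hz
    refine Integrable.mono' (integrable_const 2)
      ((Continuous.aestronglyMeasurable (by continuity))) ?_
    filter_upwards [hae] with x hx
    have h1 : ‖Complex.exp (-(↑x*z))‖ ≤ 1 := by
      rw [Complex.norm_exp]
      refine Real.exp_le_one_iff.mpr ?_
      have : (-(↑x*z)).re = -(x * z.re) := by simp
      rw [this]
      exact neg_nonpos.mpr (mul_nonneg hx.le hz)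
    calc ‖Complex.exp (-(↑x*z)) - 1‖ ≤ ‖Complex.exp (-(↑x*z))‖ + ‖(1:ℂ)‖ := norm_sub_le _ _
      _ ≤ 1 + 1 := by rw [norm_one]; linarith
      _ = 2 := by norm_num
  -- lapExp at a real point
  have hreal : ∀ r : ℝ, 0 ≤ r →
      lapExp a lam μ (r : ℂ) = ((a * r + lam * ∫ x, (Real.exp (-(x*r)) - 1) ∂μ : ℝ) : ℂ) := by
    intro r hr
    have hptw : ∀ x : ℝ, Complex.exp (-(↑x * (r:ℂ))) - 1 = ((Real.exp (-(x*r)) - 1 : ℝ) : ℂ) := by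
      intro x
      rw [Complex.ofReal_sub, Complex.ofReal_one, Complex.ofReal_exp, Complex.ofReal_neg,
        Complex.ofReal_mul]
    have hInt : (∫ x : ℝ, (Complex.exp (-(x * (r:ℂ))) - 1) ∂μ)
        = ((∫ x, (Real.exp (-(x*r)) - 1) ∂μ : ℝ) : ℂ) := by
      rw [show (fun x : ℝ => Complex.exp (-(x * (r:ℂ))) - 1)
          = fun x : ℝ => ((Real.exp (-(x*r)) - 1 : ℝ) : ℂ) from funext hptw]
      exact integral_ofReal
    rw [lapExp, hInt]
    push_cast
    ring
  -- continuity of the truncated Laplace exponent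
  set Kt : ℝ → ℝ := fun r => a * r + lam * ∫ x, (Real.exp (-(x * max r 0)) - 1) ∂μ with hKt
  have hcont : Continuous Kt := by
    apply (continuous_const.mul continuous_id).add
    apply continuous_const.mul
    apply continuous_of_dominated (bound := fun _ : ℝ => (1:ℝ))
    · intro r
      exact (Continuous.aestronglyMeasurable (by continuity))
    · intro r
      filter_upwards [hae] with x hx
      have h1 : Real.exp (-(x * max r 0)) ≤ 1 := Real.exp_le_one_iff.mpr
        (neg_nonpos.mpr (mul_nonneg hx.le (le_max_right r 0)))
      have h2 : (0:ℝ) < Real.exp (-(x * max r 0)) := Real.exp_pos _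
      rw [Real.norm_eq_abs, abs_le]; constructor <;> linarith
    · exact integrable_const 1
    · filter_upwards with x
      have hcm : Continuous fun r : ℝ => -(x * max r 0) :=
        ((continuous_const.mul (continuous_id.max continuous_const))).neg
      exact (Real.continuous_exp.comp hcm).sub continuous_const
  have hKt0 : Kt 0 = 0 := by simp [hKt]
  set R := (s + lam) / a with hRdef
  have hR0 : 0 ≤ R := by positivity
  have hRs : s ≤ Kt R := by
    have hmax : max R 0 = R := max_eq_left hR0
    have hint1 : (-1 : ℝ) ≤ ∫ x, (Real.exp (-(x * max R 0)) - 1) ∂μ := by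
      rw [show (-1 : ℝ) = ∫ _ : ℝ, (-1 : ℝ) ∂μ by simp]
      apply integral_mono_ae (integrable_const (-1))
      · rw [hmax]; exact hGint R hR0
      · filter_upwards with x
        have := Real.exp_pos (-(x * max R 0)); show (-1:ℝ) ≤ _; linarith
    have haR : a * R = s + lam := by rw [hRdef]; field_simp
    have h2 : lam * (-1) ≤ lam * ∫ x, (Real.exp (-(x * max R 0)) - 1) ∂μ :=
      mul_le_mul_of_nonneg_left hint1 hlam.le
    simp only [hKt]; nlinarith
  obtain ⟨c, hcmem, hKtc⟩ : ∃ c ∈ Set.Icc (0:ℝ) R, Kt c = s := by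
    have hiv := intermediate_value_Icc hR0 hcont.continuousOn
    have hsmem : s ∈ Set.Icc (Kt 0) (Kt R) := by rw [hKt0]; exact ⟨hs.le, hRs⟩
    obtain ⟨c, hc, hc2⟩ := hiv hsmem
    exact ⟨c, hc, hc2⟩
  have hc0 : 0 < c := by
    have hne : c ≠ 0 := by
      intro h; rw [h, hKt0] at hKtc; exact hs.ne' hKtc.symm
    exact lt_of_le_of_ne hcmem.1 (Ne.symm hne)
  have hKc : a * c + lam * ∫ x, (Real.exp (-(x*c)) - 1) ∂μ = s := by
    have : Kt c = a * c + lam * ∫ x, (Real.exp (-(x*c)) - 1) ∂μ := by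
      simp only [hKt, max_eq_left hc0.le]
    rw [← this]; exact hKtc
  have hlapc : lapExp a lam μ (c : ℂ) = (s : ℂ) := by rw [hreal c hc0.le, hKc]
  refine ⟨c, hc0, hlapc, ?_⟩
  -- uniqueness
  intro z hz hkz
  rw [lapExp] at hkz
  have hlapc' := hlapc
  rw [lapExp] at hlapc'
  set r := z.re with hrdef
  set Iz := ∫ x : ℝ, (Complex.exp (-(x * z)) - 1) ∂μ with hIz
  set Ic := ∫ x : ℝ, (Complex.exp (-(x * (c:ℂ))) - 1) ∂μ with hIc
  have hIzint := hCint z hz.le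
  have hIcint : Integrable (fun x : ℝ => Complex.exp (-(x * (c:ℂ))) - 1) μ :=
    hCint c (by simp [hc0.le])
  set gr := ∫ x, (Real.exp (-(x*r)) - 1) ∂μ with hgr
  set gc := ∫ x, (Real.exp (-(x*c)) - 1) ∂μ with hgcdef
  -- step 1 : s ≤ a r + lam * gr
  have hre2 : ∫ x, (Complex.exp (-(↑x * z)) - 1).re ∂μ = Iz.re := by
    simpa using integral_re hIzint
  have hre : a * r + lam * Iz.re = s := by
    have h1 := congrArg Complex.re hkz
    simpa [Complex.add_re, Complex.mul_re, Complex.ofReal_re, Complex.ofReal_im] using h1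
  have hIzre_le : Iz.re ≤ gr := by
    rw [← hre2, hgr]
    apply integral_mono_ae hIzint.re (hGint r hz.le)
    filter_upwards with x
    show (Complex.exp (-(↑x * z)) - 1).re ≤ Real.exp (-(x*r)) - 1
    have h3 : (Complex.exp (-(↑x * z))).re ≤ Real.exp (-(x*r)) := by
      have h4 := Complex.re_le_norm (Complex.exp (-(↑x * z)))
      rwa [Complex.norm_exp, show (-(↑x*z)).re = -(x*r) by simp [hrdef]] at h4
    simp only [Complex.sub_re, Complex.one_re]
    linarith
  have hsles : s ≤ a * r + lam * gr := by
    have := mul_le_mul_of_nonneg_left hIzre_le hlam.le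
    linarith
  -- step 2 : c ≤ r
  have hcr : c ≤ r := by
    by_contra hlt
    push_neg at hlt
    set θ := r / c with hθdef
    have hθ0 : 0 < θ := div_pos hz hc0
    have hθ1 : θ < 1 := (div_lt_one hc0).mpr hlt
    have hθc : θ * c = r := div_mul_cancel₀ r hc0.ne'
    have hptw2 : ∀ x : ℝ, 0 < x → Real.exp (-(x*r)) - 1 ≤ θ * (Real.exp (-(x*c)) - 1) := by
      intro x hx
      have hcvx := convexOn_exp.2 (Set.mem_univ (-(x*c))) (Set.mem_univ 0) hθ0.le
        (by linarith : (0:ℝ) ≤ 1 - θ) (by ring)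
      simp only [smul_eq_mul, mul_zero, add_zero, Real.exp_zero] at hcvx
      have harg : θ * -(x*c) = -(x*r) := by rw [← hθc]; ring
      rw [harg] at hcvx
      linarith
    have hint : gr ≤ θ * gc := by
      rw [hgr, hgcdef, ← integral_const_mul]
      apply integral_mono_ae (hGint r hz.le) ((hGint c hc0.le).const_mul θ)
      filter_upwards [hae] with x hx using hptw2 x hx
    have hKcθ : a * (θ*c) + lam * (θ * gc) = θ * s := by
      have h5 : a * (θ*c) + lam * (θ*gc) = θ * (a*c + lam*gc) := by ring
      rw [h5, hKc]
    have h6 : a * r + lam * gr ≤ θ * s := by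
      calc a * r + lam * gr ≤ a * (θ*c) + lam * (θ*gc) := by
            rw [hθc]
            have := mul_le_mul_of_nonneg_left hint hlam.le
            linarith
        _ = θ * s := hKcθ
    nlinarith
  -- step 3 : the derivative bound lam * M < a
  set M := ∫ x, x * Real.exp (-(x*c)) ∂μ with hM
  have hMint : Integrable (fun x => x * Real.exp (-(x*c))) μ := by
    have hcont2 : Continuous fun x : ℝ => x * Real.exp (-(x*c)) :=
      continuous_id.mul (Real.continuous_exp.comp ((continuous_id.mul continuous_const).neg))
    refine Integrable.mono' (integrable_const (1/c)) hcont2.aestronglyMeasurable ?_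
    filter_upwards [hae] with x hx
    have h1 : x * c + 1 ≤ Real.exp (x*c) := Real.add_one_le_exp _
    have hep : 0 < Real.exp (x*c) := Real.exp_pos _
    have hxe : 0 ≤ x * Real.exp (-(x*c)) := mul_nonneg hx.le (Real.exp_pos _).le
    rw [Real.norm_eq_abs, abs_of_nonneg hxe, Real.exp_neg]
    have hkey : c * (x * (Real.exp (x*c))⁻¹) ≤ 1 := by
      rw [show c * (x * (Real.exp (x*c))⁻¹) = (x*c) * (Real.exp (x*c))⁻¹ by ring]
      calc (x*c) * (Real.exp (x*c))⁻¹ ≤ Real.exp (x*c) * (Real.exp (x*c))⁻¹ := by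
            gcongr
            linarith
        _ = 1 := mul_inv_cancel₀ hep.ne'
    rw [le_div_iff₀ hc0]
    calc x * (Real.exp (x*c))⁻¹ * c = c * (x * (Real.exp (x*c))⁻¹) := by ring
      _ ≤ 1 := hkey
  have hMle : lam * (c * M) ≤ a * c - s := by
    have hint2 : c * M ≤ - gc := by
      rw [hM, hgcdef, ← integral_const_mul, ← integral_neg]
      apply integral_mono_ae (hMint.const_mul c) ((hGint c hc0.le).neg)
      filter_upwards [hae] with x hx
      have h1 : x*c + 1 ≤ Real.exp (x*c) := Real.add_one_le_exp _
      have hep : 0 < Real.exp (x*c) := Real.exp_pos _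
      have hkey : (x*c) * (Real.exp (x*c))⁻¹ ≤ 1 - (Real.exp (x*c))⁻¹ := by
        have h2 : (x*c) * (Real.exp (x*c))⁻¹ ≤ (Real.exp (x*c) - 1) * (Real.exp (x*c))⁻¹ :=
          mul_le_mul_of_nonneg_right (by linarith) (inv_nonneg.mpr hep.le)
        have h3 : (Real.exp (x*c) - 1) * (Real.exp (x*c))⁻¹ = 1 - (Real.exp (x*c))⁻¹ := by
          field_simp
        linarith
      show c * (x * Real.exp (-(x*c))) ≤ -(Real.exp (-(x*c)) - 1)
      rw [Real.exp_neg]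
      have h4 : c * (x * (Real.exp (x*c))⁻¹) = (x*c) * (Real.exp (x*c))⁻¹ := by ring
      linarith
    have h7 := mul_le_mul_of_nonneg_left hint2 hlam.le
    have h8 : lam * (- gc) = a * c - s := by linarith [hKc]
    linarith
  have hMa : lam * M < a := by
    have h9 : lam * (c*M) = (lam*M)*c := by ring
    have h10 : (lam*M)*c < a*c := by rw [← h9]; linarith
    exact lt_of_mul_lt_mul_right h10 hc0.le
  -- step 4 : contraction
  have heq : (a:ℂ) * (z - c) = lam * (Ic - Iz) := by
    linear_combination hkz - hlapc'
  have hDint : Integrable (fun x : ℝ => Complex.exp (-(x * (c:ℂ))) - Complex.exp (-(x * z))) μ :=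
    (hIcint.sub hIzint).congr (Eventually.of_forall fun x => by simp only [Pi.sub_apply]; ring)
  have hdiff : Ic - Iz = ∫ x : ℝ, (Complex.exp (-(x * (c:ℂ))) - Complex.exp (-(x * z))) ∂μ := by
    rw [hIc, hIz, ← integral_sub hIcint hIzint]
    congr 1
    funext x
    ring
  have hnorm : ∀ᵐ x : ℝ ∂μ, ‖Complex.exp (-(↑x * (c:ℂ))) - Complex.exp (-(↑x * z))‖
      ≤ (x * Real.exp (-(x*c))) * ‖z - (c:ℂ)‖ := by
    filter_upwards [hae] with x hx
    have hsplit : Complex.exp (-(↑x * z))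
        = Complex.exp (-(↑x * (c:ℂ))) * Complex.exp (-(↑x * (z - c))) := by
      rw [← Complex.exp_add]
      congr 1
      ring
    rw [hsplit, show Complex.exp (-(↑x * (c:ℂ)))
        - Complex.exp (-(↑x * (c:ℂ))) * Complex.exp (-(↑x * (z-(c:ℂ))))
        = Complex.exp (-(↑x * (c:ℂ))) * (1 - Complex.exp (-(↑x * (z-(c:ℂ))))) from by ring,
      norm_mul]
    have h1 : ‖Complex.exp (-(↑x * (c:ℂ)))‖ = Real.exp (-(x*c)) := by
      rw [Complex.norm_exp]
      congr 1
      simp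
    have h2 : ‖1 - Complex.exp (-(↑x * (z - (c:ℂ))))‖ ≤ x * ‖z - (c:ℂ)‖ := by
      rw [norm_sub_rev]
      have hw : (-(↑x * (z - (c:ℂ)))).re ≤ 0 := by
        have h11 : (-(↑x * (z - (c:ℂ)))).re = -(x * (r - c)) := by simp [hrdef]
        rw [h11]
        exact neg_nonpos.mpr (mul_nonneg hx.le (by linarith))
      calc ‖Complex.exp (-(↑x * (z - (c:ℂ)))) - 1‖ ≤ ‖-(↑x * (z - (c:ℂ)))‖ :=
            norm_cexp_sub_one_le hw
        _ = x * ‖z - (c:ℂ)‖ := by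
            rw [norm_neg, norm_mul, Complex.norm_real, Real.norm_eq_abs, abs_of_pos hx]
    rw [h1]
    calc Real.exp (-(x*c)) * ‖1 - Complex.exp (-(↑x * (z - (c:ℂ))))‖
        ≤ Real.exp (-(x*c)) * (x * ‖z - (c:ℂ)‖) :=
          mul_le_mul_of_nonneg_left h2 (Real.exp_pos _).le
      _ = (x * Real.exp (-(x*c))) * ‖z - (c:ℂ)‖ := by ring
  have h2 : ‖Ic - Iz‖ ≤ M * ‖z - (c:ℂ)‖ := by
    rw [hdiff]
    calc ‖∫ x : ℝ, (Complex.exp (-(x * (c:ℂ))) - Complex.exp (-(x * z))) ∂μ‖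
        ≤ ∫ x : ℝ, ‖Complex.exp (-(↑x * (c:ℂ))) - Complex.exp (-(↑x * z))‖ ∂μ :=
          norm_integral_le_integral_norm _
      _ ≤ ∫ x : ℝ, (x * Real.exp (-(x*c))) * ‖z - (c:ℂ)‖ ∂μ :=
          integral_mono_ae hDint.norm (hMint.mul_const _) hnorm
      _ = M * ‖z - (c:ℂ)‖ := by rw [integral_mul_const]
  have hfin : a * ‖z - (c:ℂ)‖ ≤ (lam * M) * ‖z - (c:ℂ)‖ := by
    have h0 : ‖(a:ℂ) * (z - c)‖ = a * ‖z - (c:ℂ)‖ := by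
      rw [norm_mul, Complex.norm_real, Real.norm_eq_abs, abs_of_pos ha]
    have h1 : ‖(lam:ℂ) * (Ic - Iz)‖ = lam * ‖Ic - Iz‖ := by
      rw [norm_mul, Complex.norm_real, Real.norm_eq_abs, abs_of_pos hlam]
    calc a * ‖z - (c:ℂ)‖ = ‖(a:ℂ) * (z - c)‖ := h0.symm
      _ = ‖(lam:ℂ) * (Ic - Iz)‖ := by rw [heq]
      _ = lam * ‖Ic - Iz‖ := h1
      _ ≤ lam * (M * ‖z - (c:ℂ)‖) := mul_le_mul_of_nonneg_left h2 hlam.le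
      _ = (lam * M) * ‖z - (c:ℂ)‖ := by ring
  by_contra hne
  have hpos : 0 < ‖z - (c:ℂ)‖ := by
    rw [norm_pos_iff, sub_ne_zero]
    exact hne
  have : a ≤ lam * M := le_of_mul_le_mul_right hfin hpos
  linarith
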